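/- The relation x ⪯ y defined by y((-∞,t)) ≤ x((-∞,t)) for all t ∈ ℝ is a partial order (the Olson order) on the set of all observables of a σ-lattice effect algebra E. -/

import Mathlib

structure EffectAlgebra (E : Type*) where
  add : E → E → Option E
  zero : E
  one : E
  comm : ∀ a b, add a b = add b a
  assoc : ∀ a b c, (add a b).bind (fun d => add d c) = (add b c).bind (fun d => add a d)
  orth : ∀ a : E, ∃! b, add a b = some one
  pos_one : ∀ a b, add a one = some b → a = zero

namespace EffectAlgebra

variable {E : Type*}

/-- The induced order: `a ≤ b` iff `a + c = b` for some `c`. -/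
def le (EA : EffectAlgebra E) (a b : E) : Prop := ∃ c, EA.add a c = some b

/-- The orthosupplement `a'`, the unique element with `a + a' = 1`. -/
noncomputable def orthosupp (EA : EffectAlgebra E) (a : E) : E :=
  Classical.choose (EA.orth a).exists

/-- `s` is the supremum of `S` with respect to the induced order. -/
def IsSup (EA : EffectAlgebra E) (S : Set E) (s : E) : Prop :=
  (∀ x ∈ S, EA.le x s) ∧ ∀ b, (∀ x ∈ S, EA.le x b) → EA.le s b

/-- `s` is the infimum of `S` with respect to the induced order. -/
def IsInf (EA : EffectAlgebra E) (S : Set E) (s : E) : Prop :=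
  (∀ x ∈ S, EA.le s x) ∧ ∀ b, (∀ x ∈ S, EA.le b x) → EA.le b s

/-- Every increasing sequence has a supremum. -/
def MonotoneSigmaComplete (EA : EffectAlgebra E) : Prop :=
  ∀ f : ℕ → E, (∀ n, EA.le (f n) (f (n + 1))) → ∃ s, EA.IsSup (Set.range f) s

/-- A σ-lattice effect algebra: countable suprema and infima exist. -/
def SigmaLattice (EA : EffectAlgebra E) : Prop :=
  (∀ f : ℕ → E, ∃ s, EA.IsSup (Set.range f) s) ∧
  (∀ f : ℕ → E, ∃ s, EA.IsInf (Set.range f) s)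

/-- A complete lattice effect algebra: arbitrary suprema and infima exist. -/
def CompleteEA (EA : EffectAlgebra E) : Prop :=
  (∀ S : Set E, ∃ s, EA.IsSup S s) ∧ (∀ S : Set E, ∃ s, EA.IsInf S s)

/-- A lattice effect algebra: binary suprema and infima exist. -/
def LatticeEA (EA : EffectAlgebra E) : Prop :=
  (∀ a b : E, ∃ s, EA.IsSup {a, b} s) ∧ (∀ a b : E, ∃ s, EA.IsInf {a, b} s)

end EffectAlgebra

/-- Borel subsets of the real line. -/
abbrev BorelSet := {A : Set ℝ // MeasurableSet A}

def bIio (t : ℝ) : BorelSet := ⟨Set.Iio t, measurableSet_Iio⟩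
def bIic (t : ℝ) : BorelSet := ⟨Set.Iic t, measurableSet_Iic⟩

/-- An observable on a (monotone σ-complete) effect algebra: a unital,
additive map on the Borel σ-algebra preserving suprema of increasing sequences. -/
structure Observable {E : Type*} (EA : EffectAlgebra E) where
  toFun : BorelSet → E
  unital : toFun ⟨Set.univ, MeasurableSet.univ⟩ = EA.one
  additive : ∀ A B : BorelSet, Disjoint A.1 B.1 →
    EA.add (toFun A) (toFun B) = some (toFun ⟨A.1 ∪ B.1, A.2.union B.2⟩)
  sup_cont : ∀ f : ℕ → BorelSet, (∀ n, (f n).1 ⊆ (f (n + 1)).1) →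
    EA.IsSup (Set.range fun n => toFun (f n))
      (toFun ⟨⋃ n, (f n).1, MeasurableSet.iUnion (fun n => (f n).2)⟩)

namespace Observable

variable {E : Type*} {EA : EffectAlgebra E}

/-- The Olson (spectral) order on observables. -/
def OlsonLe (x y : Observable EA) : Prop :=
  ∀ t : ℝ, EA.le (y.toFun (bIio t)) (x.toFun (bIio t))

/-- An observable is bounded if `x(C) = 1` for some compact set `C`. -/
def Bounded (x : Observable EA) : Prop :=
  ∃ C : Set ℝ, ∃ hC : IsCompact C, x.toFun ⟨C, hC.measurableSet⟩ = EA.one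

/-- `x` is the question observable `q_a` of the element `a`. -/
def IsQuestion (x : Observable EA) (a : E) : Prop :=
  ∀ t : ℝ, x.toFun (bIio t) =
    if t ≤ 0 then EA.zero else if t ≤ 1 then EA.orthosupp a else EA.one

/-- The spectrum of `x` lies in `[0,1]`. -/
def SpectrumIn01 (x : Observable EA) : Prop :=
  x.toFun ⟨Set.Icc 0 1, measurableSet_Icc⟩ = EA.one

/-- `z` is the infimum of `S` in the Olson order on bounded observables. -/
def IsOlsonInf (S : Set (Observable EA)) (z : Observable EA) : Prop :=
  z.Bounded ∧ (∀ x ∈ S, z.OlsonLe x) ∧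
    ∀ w : Observable EA, w.Bounded → (∀ x ∈ S, w.OlsonLe x) → w.OlsonLe z

/-- `z` is the supremum of `S` in the Olson order on bounded observables. -/
def IsOlsonSup (S : Set (Observable EA)) (z : Observable EA) : Prop :=
  z.Bounded ∧ (∀ x ∈ S, x.OlsonLe z) ∧
    ∀ w : Observable EA, w.Bounded → (∀ x ∈ S, x.OlsonLe w) → z.OlsonLe w

end Observable

/-- A spectral resolution: monotone, with infimum 0, supremum 1, left continuous. -/
def SpectralResolution {E : Type*} (EA : EffectAlgebra E) (F : ℝ → E) : Prop :=
  (∀ t s : ℝ, t < s → EA.le (F t) (F s)) ∧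
  EA.IsInf (Set.range F) EA.zero ∧
  EA.IsSup (Set.range F) EA.one ∧
  ∀ s : ℝ, EA.IsSup (F '' Set.Iio s) (F s)

section Aux

variable {E : Type*} (EA : EffectAlgebra E)

lemma EA_one_zero : EA.add EA.one EA.zero = some EA.one := by
  obtain ⟨b, hb, -⟩ := EA.orth EA.one
  have hb' : EA.add b EA.one = some EA.one := by rwa [EA.comm] at hb
  have hb0 : b = EA.zero := EA.pos_one b EA.one hb'
  rwa [hb0] at hb

lemma EA_zero_add (a : E) : EA.add EA.zero a = some a := by
  obtain ⟨a', ha', -⟩ := EA.orth a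
  have h := EA.assoc EA.zero a a'
  rw [ha'] at h
  simp only [Option.bind] at h
  have h01 : EA.add EA.zero EA.one = some EA.one := by rw [EA.comm]; exact EA_one_zero EA
  rw [h01] at h
  obtain ⟨d, hd, hda'⟩ := Option.bind_eq_some_iff.mp h
  have hu := (EA.orth a').unique (by rwa [EA.comm] at hda') (by rwa [EA.comm] at ha')
  rw [hd, hu]

lemma EA_add_zero (a : E) : EA.add a EA.zero = some a := by
  rw [EA.comm]; exact EA_zero_add EA a

lemma EA_cancel {a b c d : E} (h1 : EA.add a c = some d) (h2 : EA.add b c = some d) :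
    a = b := by
  obtain ⟨d', hd', -⟩ := EA.orth d
  have ha := EA.assoc a c d'
  have hb := EA.assoc b c d'
  rw [h1] at ha; rw [h2] at hb
  simp only [Option.bind] at ha hb
  rw [hd'] at ha hb
  obtain ⟨e, he, hae⟩ := Option.bind_eq_some_iff.mp ha.symm
  obtain ⟨e₂, he₂, hbe⟩ := Option.bind_eq_some_iff.mp hb.symm
  rw [he] at he₂
  obtain rfl : e = e₂ := Option.some.inj he₂
  exact (EA.orth e).unique (by rwa [EA.comm] at hae) (by rwa [EA.comm] at hbe)

lemma EA_pos {a b : E} (h : EA.add a b = some EA.zero) : a = EA.zero := by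
  have h' := EA.assoc a b EA.one
  rw [h] at h'
  simp only [Option.bind] at h'
  rw [EA.comm EA.zero EA.one, EA_one_zero EA] at h'
  obtain ⟨f, hf, haf⟩ := Option.bind_eq_some_iff.mp h'.symm
  have hb0 : b = EA.zero := EA.pos_one b f hf
  rw [hb0] at h
  exact EA_cancel EA h (EA_zero_add EA EA.zero)

lemma EA_le_refl (a : E) : EA.le a a := ⟨EA.zero, EA_add_zero EA a⟩

lemma EA_le_trans {a b c : E} (h1 : EA.le a b) (h2 : EA.le b c) : EA.le a c := by
  obtain ⟨u, hu⟩ := h1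
  obtain ⟨v, hv⟩ := h2
  have h := EA.assoc a u v
  rw [hu] at h
  simp only [Option.bind] at h
  rw [hv] at h
  obtain ⟨e, -, hae⟩ := Option.bind_eq_some_iff.mp h.symm
  exact ⟨e, hae⟩

lemma EA_le_antisymm {a b : E} (h1 : EA.le a b) (h2 : EA.le b a) : a = b := by
  obtain ⟨u, hu⟩ := h1
  obtain ⟨v, hv⟩ := h2
  have h := EA.assoc a u v
  rw [hu] at h
  simp only [Option.bind] at h
  rw [hv] at h
  obtain ⟨e, he, hae⟩ := Option.bind_eq_some_iff.mp h.symm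
  have he0 : e = EA.zero :=
    EA_cancel EA (by rwa [EA.comm] at hae) (EA_zero_add EA a)
  rw [he0] at he
  have hu0 : u = EA.zero := EA_pos EA he
  rw [hu0, EA_add_zero EA a] at hu
  exact Option.some.inj hu

lemma EA_sup_unique {S : Set E} {s s' : E} (h : EA.IsSup S s) (h' : EA.IsSup S s') :
    s = s' :=
  EA_le_antisymm EA (h.2 s' h'.1) (h'.2 s h.1)

variable {EA}

lemma obs_empty (x : Observable EA) (h : MeasurableSet (∅ : Set ℝ)) :
    x.toFun ⟨∅, h⟩ = EA.zero := by
  have hadd := x.additive ⟨∅, h⟩ ⟨∅, h⟩ (disjoint_bot_left)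
  have he : (⟨(∅ : Set ℝ) ∪ ∅, h.union h⟩ : BorelSet) = ⟨∅, h⟩ :=
    Subtype.ext (Set.union_self _)
  rw [he] at hadd
  exact EA_cancel EA (by rwa [EA.comm] at hadd)
    (EA_zero_add EA (x.toFun ⟨∅, h⟩))

lemma obs_ext {x y : Observable EA} (h : ∀ A : BorelSet, x.toFun A = y.toFun A) :
    x = y := by
  obtain ⟨xf, _, _, _⟩ := x
  obtain ⟨yf, _, _, _⟩ := y
  have : xf = yf := funext h
  subst this
  rfl

end Aux

/-- the Olson relation `x ⪯ y ↔ ∀ t, y((-∞,t)) ≤ x((-∞,t))` is a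
partial order on the set of all observables of a σ-lattice effect algebra. -/
theorem stmt8 {E : Type*} (EA : EffectAlgebra E) (hE : EA.SigmaLattice) :
    (∀ x : Observable EA, x.OlsonLe x) ∧
    (∀ x y z : Observable EA, x.OlsonLe y → y.OlsonLe z → x.OlsonLe z) ∧
    (∀ x y : Observable EA, x.OlsonLe y → y.OlsonLe x → x = y) := by
  refine ⟨fun x t => EA_le_refl EA _, fun x y z hxy hyz t =>
    EA_le_trans EA (hyz t) (hxy t), fun x y hxy hyx => ?_⟩
  -- x and y agree on all sets (-∞, t)
  have hIio : ∀ t : ℝ, x.toFun (bIio t) = y.toFun (bIio t) := fun t =>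
    EA_le_antisymm EA (hyx t) (hxy t)
  -- they agree on all Borel sets, by the π-λ theorem
  have key : ∀ ⦃A : Set ℝ⦄, MeasurableSet A →
      ∀ h : MeasurableSet A, x.toFun ⟨A, h⟩ = y.toFun ⟨A, h⟩ := by
    refine MeasurableSpace.induction_on_inter
      (C := fun A _ => ∀ h : MeasurableSet A, x.toFun ⟨A, h⟩ = y.toFun ⟨A, h⟩)
      (BorelSpace.measurable_eq.trans (borel_eq_generateFrom_Iio ℝ))
      isPiSystem_Iio ?_ ?_ ?_ ?_
    · intro h
      rw [obs_empty x h, obs_empty y h]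
    · rintro A ⟨t, rfl⟩ h
      have : (⟨Set.Iio t, h⟩ : BorelSet) = bIio t := rfl
      rw [this]; exact hIio t
    · intro A hA hC h
      have hxadd := x.additive ⟨A, hA⟩ ⟨Aᶜ, h⟩ disjoint_compl_right
      have hyadd := y.additive ⟨A, hA⟩ ⟨Aᶜ, h⟩ disjoint_compl_right
      have hu : (⟨A ∪ Aᶜ, hA.union h⟩ : BorelSet) =
          ⟨Set.univ, MeasurableSet.univ⟩ := Subtype.ext (Set.union_compl_self A)
      rw [hu, x.unital] at hxadd
      rw [hu, y.unital] at hyadd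
      rw [hC hA] at hxadd
      exact (EA.orth (y.toFun ⟨A, hA⟩)).unique hxadd hyadd
    · intro f hdisj hmeas hC
      -- partial unions
      set g : ℕ → Set ℝ := fun n => Nat.rec (f 0) (fun k s => s ∪ f (k + 1)) n with hg
      have hg0 : g 0 = f 0 := rfl
      have hgs : ∀ n, g (n + 1) = g n ∪ f (n + 1) := fun n => rfl
      have hgm : ∀ n, MeasurableSet (g n) := by
        intro n
        induction n with
        | zero => exact hmeas 0
        | succ k ih => rw [hgs]; exact ih.union (hmeas (k + 1))
      have hfg : ∀ n, f n ⊆ g n := by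
        intro n
        cases n with
        | zero => exact subset_rfl
        | succ k => rw [hgs]; exact Set.subset_union_right
      have hgU : ⋃ n, g n = ⋃ n, f n := by
        apply Set.Subset.antisymm
        · refine Set.iUnion_subset fun n => ?_
          induction n with
          | zero => exact Set.subset_iUnion f 0
          | succ k ih => rw [hgs]; exact Set.union_subset ih (Set.subset_iUnion f (k + 1))
        · exact Set.iUnion_mono hfg
      have hgd : ∀ n m, n < m → Disjoint (g n) (f m) := by
        intro n
        induction n with
        | zero => intro m hm; exact hdisj (Nat.ne_of_lt hm)
        | succ k ih =>
          intro m hm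
          rw [hgs]
          exact Set.disjoint_union_left.mpr
            ⟨ih m (Nat.lt_of_succ_lt hm), hdisj (Nat.ne_of_lt hm)⟩
      -- x and y agree on all partial unions
      have hgC : ∀ n, x.toFun ⟨g n, hgm n⟩ = y.toFun ⟨g n, hgm n⟩ := by
        intro n
        induction n with
        | zero => exact hC 0 (hgm 0)
        | succ k ih =>
          have hxadd := x.additive ⟨g k, hgm k⟩ ⟨f (k + 1), hmeas (k + 1)⟩
            (hgd k (k + 1) (Nat.lt_succ_self k))
          have hyadd := y.additive ⟨g k, hgm k⟩ ⟨f (k + 1), hmeas (k + 1)⟩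
            (hgd k (k + 1) (Nat.lt_succ_self k))
          rw [ih, hC (k + 1)] at hxadd
          rw [hxadd] at hyadd
          have e : (⟨g k ∪ f (k + 1), (hgm k).union (hmeas (k + 1))⟩ : BorelSet) =
              ⟨g (k + 1), hgm (k + 1)⟩ := Subtype.ext (hgs k).symm
          rw [e] at hyadd
          exact Option.some.inj hyadd
      -- pass to the supremum
      intro h
      set F : ℕ → BorelSet := fun n => ⟨g n, hgm n⟩ with hF
      have hmono : ∀ n, (F n).1 ⊆ (F (n + 1)).1 := by
        intro n; rw [hF]; simp only; rw [hgs]; exact Set.subset_union_left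
      have hsx := x.sup_cont F hmono
      have hsy := y.sup_cont F hmono
      have hfun : (fun n => x.toFun (F n)) = fun n => y.toFun (F n) :=
        funext fun n => hgC n
      rw [hfun] at hsx
      have e2 : (⟨⋃ n, (F n).1, MeasurableSet.iUnion fun n => (F n).2⟩ : BorelSet) =
          ⟨⋃ i, f i, h⟩ := Subtype.ext hgU
      rw [e2] at hsx hsy
      exact EA_sup_unique EA hsx hsy
  exact obs_ext fun A => by
    have := key A.2 A.2
    have eA : (⟨A.1, A.2⟩ : BorelSet) = A := Subtype.ext rfl
    rwa [eA] at this
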